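/- The subgroup of GL_2(ℤ) generated by the matrices [[1,2],[0,1]] and [[1,0],[2,1]] is a free group of rank 2, has finite index in GL_2(ℤ), and contains the kernel of the reduction map GL_2(ℤ) → GL_2(ℤ/4ℤ). -/

import Mathlib

open Matrix

namespace Stmt9

/-- reduced relation -/
def Rd (p q : Fin 2 × Bool) : Prop := ¬(p.1 = q.1 ∧ p.2 = !q.2)

theorem chain'_reduce (L : List (Fin 2 × Bool)) : List.Chain' Rd (FreeGroup.reduce L) := by
  induction L with
  | nil => simp [List.Chain']
  | cons x L ih =>
    rw [FreeGroup.reduce.cons]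
    rcases h : FreeGroup.reduce L with _ | ⟨hd, tl⟩
    · simp [List.Chain']
    · rw [h] at ih
      by_cases hc : x.1 = hd.1 ∧ x.2 = !hd.2
      · simpa [hc, List.Chain'] using ih.tail
      · simpa [hc, List.Chain'] using List.IsChain.cons_cons (show Rd x hd from hc) ih

/-- the matrices of the letters -/
def gm : Fin 2 × Bool → Matrix (Fin 2) (Fin 2) ℤ := fun p =>
  if p.1 = 0 then (if p.2 then !![1, 2; 0, 1] else !![1, -2; 0, 1])
  else (if p.2 then !![1, 0; 2, 1] else !![1, 0; -2, 1])

def sg (b : Bool) : ℤ := cond b 1 (-1)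

def Good (p : Fin 2 × Bool) (u : Fin 2 → ℤ) : Prop :=
  sg p.2 * u 0 * u 1 > 0 ∧ (if p.1 = 0 then (u 0)^2 > (u 1)^2 else (u 1)^2 > (u 0)^2)

def vst (p : Fin 2 × Bool) : Fin 2 → ℤ := if p.1 = 0 then ![0, 1] else ![1, 0]

theorem transA (ε x y : ℤ) (hε : ε = 1 ∨ ε = -1)
    (h : y^2 > x^2 ∨ (x^2 > y^2 ∧ ε*x*y > 0)) :
    (x+2*ε*y)^2 > y^2 ∧ ε*(x+2*ε*y)*y > 0 := by
  rcases hε with rfl | rfl <;> rcases h with h | ⟨h1, h2⟩ <;>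
    constructor <;> nlinarith [sq_nonneg (x+y), sq_nonneg (x-y), sq_nonneg y]

theorem transB (ε x y : ℤ) (hε : ε = 1 ∨ ε = -1)
    (h : x^2 > y^2 ∨ (y^2 > x^2 ∧ ε*x*y > 0)) :
    (y+2*ε*x)^2 > x^2 ∧ ε*x*(y+2*ε*x) > 0 := by
  rcases hε with rfl | rfl <;> rcases h with h | ⟨h1, h2⟩ <;>
    constructor <;> nlinarith [sq_nonneg (x+y), sq_nonneg (x-y), sq_nonneg x]

end Stmt9

namespace Stmt9

theorem mulVecA (s : Bool) (u : Fin 2 → ℤ) :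
    (gm (0, s) *ᵥ u) 0 = u 0 + 2 * sg s * u 1 ∧ (gm (0, s) *ᵥ u) 1 = u 1 := by
  cases s <;> simp [gm, sg, Matrix.mulVec, dotProduct, Fin.sum_univ_two] <;> ring_nf <;> simp

theorem mulVecB (s : Bool) (u : Fin 2 → ℤ) :
    (gm (1, s) *ᵥ u) 0 = u 0 ∧ (gm (1, s) *ᵥ u) 1 = u 1 + 2 * sg s * u 0 := by
  cases s <;> simp [gm, sg, Matrix.mulVec, dotProduct, Fin.sum_univ_two] <;> ring_nf <;> simp

theorem sg_cases (b : Bool) : sg b = 1 ∨ sg b = -1 := by cases b <;> simp [sg]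

theorem key : ∀ (L : List (Fin 2 × Bool)) (a : Fin 2 × Bool),
    List.Chain' Rd (a :: L) →
    Good a (((a :: L).map gm).prod *ᵥ vst ((a :: L).getLast (List.cons_ne_nil a L))) := by
  intro L
  induction L with
  | nil =>
    intro a _
    rcases a with ⟨ga, sa⟩
    fin_cases ga <;> cases sa <;>
      simp [Good, gm, sg, vst, Matrix.mulVec, dotProduct, Fin.sum_univ_two] <;> norm_num
  | cons b L ih =>
    intro a hch
    have hRd : Rd a b := hch.rel_head
    have hch' : List.Chain' Rd (b :: L) := hch.tail
    have hGb := ih b hch'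
    have hlast : ((a :: b :: L).getLast (List.cons_ne_nil _ _)) =
        ((b :: L).getLast (List.cons_ne_nil _ _)) := List.getLast_cons _
    set u' := (((b :: L)).map gm).prod *ᵥ vst ((b :: L).getLast (List.cons_ne_nil b L)) with hu'
    have hprod : ((a :: b :: L).map gm).prod *ᵥ vst ((a :: b :: L).getLast (List.cons_ne_nil _ _))
        = gm a *ᵥ u' := by
      rw [hlast, hu', List.map_cons, List.prod_cons, ← Matrix.mulVec_mulVec]
    rw [hprod]
    rcases a with ⟨ga, sa⟩
    rcases b with ⟨gb, sb⟩
    have f2 : ∀ i : Fin 2, i = 0 ∨ i = 1 := by decide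
    rcases f2 ga with rfl | rfl
    · -- a is an A-letter
      have hcomp := mulVecA sa u'
      have hdisj : (u' 1)^2 > (u' 0)^2 ∨ ((u' 0)^2 > (u' 1)^2 ∧ sg sa * u' 0 * u' 1 > 0) := by
        rcases f2 gb with rfl | rfl
        · have hsab : sa = sb := by
            by_contra hne
            exact hRd ⟨rfl, by cases sa <;> cases sb <;> simp_all⟩
          rcases hGb with ⟨h1, h2⟩
          simp only [if_pos rfl] at h2
          exact Or.inr ⟨h2, by rw [hsab]; exact h1⟩
        · rcases hGb with ⟨h1, h2⟩
          simp only at h2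
          norm_num at h2
          exact Or.inl h2
      have := transA (sg sa) (u' 0) (u' 1) (sg_cases sa) hdisj
      refine ⟨?_, ?_⟩
      · rw [hcomp.1, hcomp.2]; exact this.2
      · simp only [Good, if_pos rfl] at *
        rw [hcomp.1, hcomp.2]; exact this.1
    · -- a is a B-letter
      have hcomp := mulVecB sa u'
      have hdisj : (u' 0)^2 > (u' 1)^2 ∨ ((u' 1)^2 > (u' 0)^2 ∧ sg sa * u' 0 * u' 1 > 0) := by
        rcases f2 gb with rfl | rfl
        · rcases hGb with ⟨h1, h2⟩
          simp only [if_pos rfl] at h2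
          exact Or.inl h2
        · have hsab : sa = sb := by
            by_contra hne
            exact hRd ⟨rfl, by cases sa <;> cases sb <;> simp_all⟩
          rcases hGb with ⟨h1, h2⟩
          simp only at h2
          norm_num at h2
          exact Or.inr ⟨h2, by rw [hsab]; exact h1⟩
      have := transB (sg sa) (u' 0) (u' 1) (sg_cases sa) hdisj
      refine ⟨?_, ?_⟩
      · rw [hcomp.1, hcomp.2]; exact this.2
      · simp only [Good, show ((1:Fin 2) = 0) = False by simp, if_false] at *
        rw [hcomp.1, hcomp.2]; exact this.1

end Stmt9

namespace Stmt9

theorem inv_coe (M : GL (Fin 2) ℤ) (X : Matrix (Fin 2) (Fin 2) ℤ)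
    (h : X * (M : Matrix (Fin 2) (Fin 2) ℤ) = 1) :
    ((M⁻¹ : GL (Fin 2) ℤ) : Matrix (Fin 2) (Fin 2) ℤ) = X := by
  calc ((M⁻¹ : GL (Fin 2) ℤ) : Matrix (Fin 2) (Fin 2) ℤ)
      = 1 * ((M⁻¹ : GL (Fin 2) ℤ) : Matrix (Fin 2) (Fin 2) ℤ) := (one_mul _).symm
    _ = X * ((M : Matrix (Fin 2) (Fin 2) ℤ) * ((M⁻¹ : GL (Fin 2) ℤ) : Matrix (Fin 2) (Fin 2) ℤ)) := by
        rw [← h, mul_assoc]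
    _ = X := by rw [Units.mul_inv, mul_one]

theorem coe_psi (A B : GL (Fin 2) ℤ)
    (hA : (A : Matrix (Fin 2) (Fin 2) ℤ) = !![1, 2; 0, 1])
    (hB : (B : Matrix (Fin 2) (Fin 2) ℤ) = !![1, 0; 2, 1]) (w : FreeGroup (Fin 2)) :
    ((FreeGroup.lift ![A, B] w : GL (Fin 2) ℤ) : Matrix (Fin 2) (Fin 2) ℤ)
      = ((w.toWord).map gm).prod := by
  have hAi : ((A⁻¹ : GL (Fin 2) ℤ) : Matrix (Fin 2) (Fin 2) ℤ) = !![1, -2; 0, 1] := by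
    apply inv_coe; rw [hA, Matrix.mul_fin_two, Matrix.one_fin_two]; norm_num
  have hBi : ((B⁻¹ : GL (Fin 2) ℤ) : Matrix (Fin 2) (Fin 2) ℤ) = !![1, 0; -2, 1] := by
    apply inv_coe; rw [hB, Matrix.mul_fin_two, Matrix.one_fin_two]; norm_num
  conv_lhs => rw [← FreeGroup.mk_toWord (x := w)]
  rw [FreeGroup.lift_mk]
  rw [show ((List.prod (List.map (fun x => cond x.2 (![A,B] x.1) (![A,B] x.1)⁻¹) w.toWord) :
      GL (Fin 2) ℤ) : Matrix (Fin 2) (Fin 2) ℤ)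
    = (Units.coeHom _) (List.prod (List.map (fun x => cond x.2 (![A,B] x.1) (![A,B] x.1)⁻¹) w.toWord)) from rfl]
  rw [map_list_prod, List.map_map]
  congr 1
  apply List.map_congr_left
  intro p _
  rcases p with ⟨g, s⟩
  have f2 : ∀ i : Fin 2, i = 0 ∨ i = 1 := by decide
  rcases f2 g with rfl | rfl <;> cases s <;>
    simp [gm, hA, hB, hAi, hBi]

theorem psi_injective (A B : GL (Fin 2) ℤ)
    (hA : (A : Matrix (Fin 2) (Fin 2) ℤ) = !![1, 2; 0, 1])
    (hB : (B : Matrix (Fin 2) (Fin 2) ℤ) = !![1, 0; 2, 1]) :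
    Function.Injective (FreeGroup.lift ![A, B] : FreeGroup (Fin 2) →* GL (Fin 2) ℤ) := by
  rw [injective_iff_map_eq_one]
  intro w hw
  by_contra hne
  have hL : w.toWord ≠ [] := fun h => hne (FreeGroup.toWord_eq_nil_iff.mp h)
  obtain ⟨a, L, hLeq⟩ := List.exists_cons_of_ne_nil hL
  have hch : List.Chain' Rd (a :: L) := by
    rw [← hLeq, ← FreeGroup.reduce_toWord w]; exact chain'_reduce _
  have hgood := key L a hch
  have hcoe := coe_psi A B hA hB w
  rw [hw, hLeq] at hcoe
  rw [← hcoe] at hgood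
  simp only [Units.val_one, Matrix.one_mulVec] at hgood
  rcases hgood with ⟨h1, _⟩
  set v := vst ((a :: L).getLast (List.cons_ne_nil a L)) with hv
  have hz : v 0 * v 1 = 0 := by
    by_cases h : ((a :: L).getLast (List.cons_ne_nil a L)).1 = 0 <;> simp [hv, vst, h]
  rw [mul_assoc, hz, mul_zero] at h1
  exact absurd h1 (lt_irrefl 0)

end Stmt9

namespace Stmt9

theorem mul_entries (p q r s : ℤ) (N : Matrix (Fin 2) (Fin 2) ℤ) :
    !![p, q; r, s] * N = !![p*N 0 0 + q*N 1 0, p*N 0 1 + q*N 1 1;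
                           r*N 0 0 + s*N 1 0, r*N 0 1 + s*N 1 1] := by
  ext i j
  fin_cases i <;> fin_cases j <;> simp [Matrix.mul_apply, Fin.sum_univ_two]

theorem reduce_step (a c : ℤ) (hc : c ≠ 0) (h : a^2 > c^2) :
    ∃ ε : ℤ, (ε = 1 ∨ ε = -1) ∧ (a + 2*ε*c)^2 < a^2 := by
  have hc2 : 0 < c^2 := by positivity
  have ha : a ≠ 0 := by intro h0; rw [h0] at h; nlinarith
  rcases lt_trichotomy (a*c) 0 with h1 | h1 | h1
  · refine ⟨1, Or.inl rfl, ?_⟩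
    rcases hc.lt_or_gt with hcn | hcp
    · have hap : 0 < a := by nlinarith
      have h2 : 0 < a - c := by linarith
      have h3 : 0 < a + c := by nlinarith
      nlinarith [mul_pos h3 (neg_pos.mpr hcn)]
    · have han : a < 0 := by nlinarith
      have h2 : 0 < c - a := by linarith
      have h3 : a + c < 0 := by nlinarith
      nlinarith [mul_pos hcp (neg_pos.mpr h3)]
  · exact absurd (mul_eq_zero.mp h1) (by push_neg; exact ⟨ha, hc⟩)
  · refine ⟨-1, Or.inr rfl, ?_⟩
    rcases hc.lt_or_gt with hcn | hcp
    · have han : a < 0 := by nlinarith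
      have h3 : a - c < 0 := by nlinarith
      nlinarith [mul_pos (neg_pos.mpr hcn) (neg_pos.mpr h3)]
    · have hap : 0 < a := by nlinarith
      have h3 : 0 < a - c := by nlinarith
      nlinarith [mul_pos hcp h3]

end Stmt9

namespace Stmt9

theorem A_inv_coe (A : GL (Fin 2) ℤ) (hA : (A : Matrix (Fin 2) (Fin 2) ℤ) = !![1, 2; 0, 1]) :
    ((A⁻¹ : GL (Fin 2) ℤ) : Matrix (Fin 2) (Fin 2) ℤ) = !![1, -2; 0, 1] := by
  apply inv_coe; rw [hA, Matrix.mul_fin_two, Matrix.one_fin_two]; norm_num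

theorem B_inv_coe (B : GL (Fin 2) ℤ) (hB : (B : Matrix (Fin 2) (Fin 2) ℤ) = !![1, 0; 2, 1]) :
    ((B⁻¹ : GL (Fin 2) ℤ) : Matrix (Fin 2) (Fin 2) ℤ) = !![1, 0; -2, 1] := by
  apply inv_coe; rw [hB, Matrix.mul_fin_two, Matrix.one_fin_two]; norm_num

theorem upper (A B : GL (Fin 2) ℤ)
    (hA : (A : Matrix (Fin 2) (Fin 2) ℤ) = !![1, 2; 0, 1]) :
    ∀ k : ℕ, ∀ b : ℤ, 2 ∣ b → b.natAbs ≤ k → ∀ M : GL (Fin 2) ℤ,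
      (M : Matrix (Fin 2) (Fin 2) ℤ) = !![1, b; 0, 1] →
      M ∈ Subgroup.closure ({A, B} : Set (GL (Fin 2) ℤ)) := by
  have hAmem : A ∈ Subgroup.closure ({A, B} : Set (GL (Fin 2) ℤ)) :=
    Subgroup.subset_closure (Set.mem_insert A {B})
  have hAi := A_inv_coe A hA
  intro k
  induction k with
  | zero =>
    intro b hb hbk M hM
    have hb0 : b = 0 := by omega
    have : M = 1 := by
      ext1
      rw [hM, hb0, Units.val_one, Matrix.one_fin_two]
    rw [this]; exact Subgroup.one_mem _
  | succ k ih =>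
    intro b hb hbk M hM
    rcases eq_or_ne b 0 with hb0 | hb0
    · have : M = 1 := by
        ext1
        rw [hM, hb0, Units.val_one, Matrix.one_fin_two]
      rw [this]; exact Subgroup.one_mem _
    · rcases hb0.lt_or_gt with hneg | hpos
      · -- b < 0, use A * M
        have hM' : ((A * M : GL (Fin 2) ℤ) : Matrix (Fin 2) (Fin 2) ℤ) = !![1, b + 2; 0, 1] := by
          rw [Units.val_mul, hA, hM, mul_entries]
          norm_num
        have hmem : A * M ∈ Subgroup.closure ({A, B} : Set (GL (Fin 2) ℤ)) :=
          ih (b + 2) (by omega) (by omega) _ hM'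
        have : M = A⁻¹ * (A * M) := by rw [inv_mul_cancel_left]
        rw [this]
        exact mul_mem (inv_mem hAmem) hmem
      · -- b > 0, use A⁻¹ * M
        have hM' : ((A⁻¹ * M : GL (Fin 2) ℤ) : Matrix (Fin 2) (Fin 2) ℤ) = !![1, b - 2; 0, 1] := by
          rw [Units.val_mul, hAi, hM, mul_entries]
          norm_num
          ring
        have hmem : A⁻¹ * M ∈ Subgroup.closure ({A, B} : Set (GL (Fin 2) ℤ)) :=
          ih (b - 2) (by omega) (by omega) _ hM'
        have : M = A * (A⁻¹ * M) := by rw [mul_inv_cancel_left]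
        rw [this]
        exact mul_mem hAmem hmem

end Stmt9

namespace Stmt9

theorem descent (A B : GL (Fin 2) ℤ)
    (hA : (A : Matrix (Fin 2) (Fin 2) ℤ) = !![1, 2; 0, 1])
    (hB : (B : Matrix (Fin 2) (Fin 2) ℤ) = !![1, 0; 2, 1]) :
    ∀ n : ℕ, ∀ M : GL (Fin 2) ℤ,
      ((M : Matrix (Fin 2) (Fin 2) ℤ) 0 0)^2 + ((M : Matrix (Fin 2) (Fin 2) ℤ) 1 0)^2 ≤ (n : ℤ) →
      ((M : Matrix (Fin 2) (Fin 2) ℤ)).det = 1 →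
      (4 ∣ (M : Matrix (Fin 2) (Fin 2) ℤ) 0 0 - 1) →
      (4 ∣ (M : Matrix (Fin 2) (Fin 2) ℤ) 1 1 - 1) →
      (2 ∣ (M : Matrix (Fin 2) (Fin 2) ℤ) 0 1) →
      (2 ∣ (M : Matrix (Fin 2) (Fin 2) ℤ) 1 0) →
      M ∈ Subgroup.closure ({A, B} : Set (GL (Fin 2) ℤ)) := by
  have hAmem : A ∈ Subgroup.closure ({A, B} : Set (GL (Fin 2) ℤ)) :=
    Subgroup.subset_closure (Set.mem_insert A {B})
  have hBmem : B ∈ Subgroup.closure ({A, B} : Set (GL (Fin 2) ℤ)) :=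
    Subgroup.subset_closure (Set.mem_insert_of_mem A rfl)
  have hAi := A_inv_coe A hA
  have hBi := B_inv_coe B hB
  intro n
  induction n using Nat.strong_induction_on with
  | _ n ih =>
    intro M hn hdet h00 h11 h01 h10
    set a := (M : Matrix (Fin 2) (Fin 2) ℤ) 0 0 with ha
    set b := (M : Matrix (Fin 2) (Fin 2) ℤ) 0 1 with hb
    set c := (M : Matrix (Fin 2) (Fin 2) ℤ) 1 0 with hc
    set d := (M : Matrix (Fin 2) (Fin 2) ℤ) 1 1 with hd
    have hdet2 : a * d - b * c = 1 := by
      rw [ha, hb, hc, hd, ← Matrix.det_fin_two]; exact hdet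
    rcases eq_or_ne c 0 with hc0 | hc0
    · -- terminal case : c = 0
      have had : a * d = 1 := by rw [hc0] at hdet2; linarith
      have ha1 : a = 1 := by
        rcases Int.eq_one_or_neg_one_of_mul_eq_one' had with ⟨h1, _⟩ | ⟨h1, _⟩ <;> omega
      have hMval : (M : Matrix (Fin 2) (Fin 2) ℤ) = !![1, b; 0, 1] := by
        rw [Matrix.eta_fin_two (M : Matrix (Fin 2) (Fin 2) ℤ), ← ha, ← hb, ← hc, ← hd,
          ha1, hc0]
        have hd1 : d = 1 := by rw [ha1, one_mul] at had; exact had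
        rw [hd1]
      exact upper A B hA b.natAbs b h01 le_rfl M hMval
    · -- descent case
      have ha0 : a ≠ 0 := by omega
      have hane : a^2 ≠ c^2 := by
        intro he
        have hz : (a - c) * (a + c) = 0 := by linear_combination he
        rcases mul_eq_zero.mp hz with hz | hz <;> omega
      rcases lt_or_gt_of_ne hane with hlt | hgt
      · -- c^2 > a^2 : use B^ε
        obtain ⟨ε, hε, hred⟩ := reduce_step c a ha0 hlt
        set W : GL (Fin 2) ℤ := if ε = 1 then B else B⁻¹ with hWdef
        have hW : (W : Matrix (Fin 2) (Fin 2) ℤ) = !![1, 0; 2*ε, 1] := by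
          rcases hε with rfl | rfl
          · rw [hWdef, if_pos rfl, hB]; norm_num
          · rw [hWdef, if_neg (by norm_num), hBi]; norm_num
        have hWmem : W ∈ Subgroup.closure ({A, B} : Set (GL (Fin 2) ℤ)) := by
          rcases hε with rfl | rfl
          · rw [hWdef, if_pos rfl]; exact hBmem
          · rw [hWdef, if_neg (by norm_num)]; exact inv_mem hBmem
        have hM' : ((W * M : GL (Fin 2) ℤ) : Matrix (Fin 2) (Fin 2) ℤ)
            = !![a, b; c + 2*ε*a, d + 2*ε*b] := by
          rw [Units.val_mul, hW, mul_entries, ← ha, ← hb, ← hc, ← hd]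
          ext i j
          fin_cases i <;> fin_cases j <;> simp <;> ring
        have e00 : ((W * M : GL (Fin 2) ℤ) : Matrix (Fin 2) (Fin 2) ℤ) 0 0 = a := by simp [hM']
        have e01 : ((W * M : GL (Fin 2) ℤ) : Matrix (Fin 2) (Fin 2) ℤ) 0 1 = b := by simp [hM']
        have e10 : ((W * M : GL (Fin 2) ℤ) : Matrix (Fin 2) (Fin 2) ℤ) 1 0 = c + 2*ε*a := by
          simp [hM']
        have e11 : ((W * M : GL (Fin 2) ℤ) : Matrix (Fin 2) (Fin 2) ℤ) 1 1 = d + 2*ε*b := by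
          simp [hM']
        have hcs : (1:ℤ) ≤ c^2 := by
          have h0 : (0:ℤ) < c^2 := by positivity
          linarith [Int.lt_iff_add_one_le.mp h0]
        have hn1 : 1 ≤ n := by
          have h : (1:ℤ) ≤ (n:ℤ) := by nlinarith [sq_nonneg a]
          exact_mod_cast h
        have hdet' : ((W * M : GL (Fin 2) ℤ) : Matrix (Fin 2) (Fin 2) ℤ).det = 1 := by
          rw [Units.val_mul, Matrix.det_mul, hW, Matrix.det_fin_two_of, hdet]; ring
        have hmem' := ih (n - 1) (by omega) (W * M)
          (by rw [e00, e10]; push_cast [Nat.cast_sub hn1]; nlinarith [sq_nonneg a])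
          hdet'
          (by rw [e00]; exact h00)
          (by rw [e11]; rcases hε with rfl | rfl <;> omega)
          (by rw [e01]; exact h01)
          (by rw [e10]; rcases hε with rfl | rfl <;> omega)
        have : M = W⁻¹ * (W * M) := by rw [inv_mul_cancel_left]
        rw [this]
        exact mul_mem (inv_mem hWmem) hmem'
      · -- a^2 > c^2 : use A^ε
        obtain ⟨ε, hε, hred⟩ := reduce_step a c hc0 hgt
        set W : GL (Fin 2) ℤ := if ε = 1 then A else A⁻¹ with hWdef
        have hW : (W : Matrix (Fin 2) (Fin 2) ℤ) = !![1, 2*ε; 0, 1] := by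
          rcases hε with rfl | rfl
          · rw [hWdef, if_pos rfl, hA]; norm_num
          · rw [hWdef, if_neg (by norm_num), hAi]; norm_num
        have hWmem : W ∈ Subgroup.closure ({A, B} : Set (GL (Fin 2) ℤ)) := by
          rcases hε with rfl | rfl
          · rw [hWdef, if_pos rfl]; exact hAmem
          · rw [hWdef, if_neg (by norm_num)]; exact inv_mem hAmem
        have hM' : ((W * M : GL (Fin 2) ℤ) : Matrix (Fin 2) (Fin 2) ℤ)
            = !![a + 2*ε*c, b + 2*ε*d; c, d] := by
          rw [Units.val_mul, hW, mul_entries, ← ha, ← hb, ← hc, ← hd]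
          ext i j
          fin_cases i <;> fin_cases j <;> simp <;> ring
        have e00 : ((W * M : GL (Fin 2) ℤ) : Matrix (Fin 2) (Fin 2) ℤ) 0 0 = a + 2*ε*c := by
          simp [hM']
        have e01 : ((W * M : GL (Fin 2) ℤ) : Matrix (Fin 2) (Fin 2) ℤ) 0 1 = b + 2*ε*d := by
          simp [hM']
        have e10 : ((W * M : GL (Fin 2) ℤ) : Matrix (Fin 2) (Fin 2) ℤ) 1 0 = c := by simp [hM']
        have e11 : ((W * M : GL (Fin 2) ℤ) : Matrix (Fin 2) (Fin 2) ℤ) 1 1 = d := by simp [hM']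
        have hcs : (1:ℤ) ≤ c^2 := by
          have h0 : (0:ℤ) < c^2 := by positivity
          linarith [Int.lt_iff_add_one_le.mp h0]
        have hn1 : 1 ≤ n := by
          have h : (1:ℤ) ≤ (n:ℤ) := by nlinarith [sq_nonneg a]
          exact_mod_cast h
        have hdet' : ((W * M : GL (Fin 2) ℤ) : Matrix (Fin 2) (Fin 2) ℤ).det = 1 := by
          rw [Units.val_mul, Matrix.det_mul, hW, Matrix.det_fin_two_of, hdet]; ring
        have hmem' := ih (n - 1) (by omega) (W * M)
          (by rw [e00, e10]; push_cast [Nat.cast_sub hn1]; nlinarith [sq_nonneg c])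
          hdet'
          (by rw [e00]; rcases hε with rfl | rfl <;> omega)
          (by rw [e11]; exact h11)
          (by rw [e01]; rcases hε with rfl | rfl <;> omega)
          (by rw [e10]; exact h10)
        have : M = W⁻¹ * (W * M) := by rw [inv_mul_cancel_left]
        rw [this]
        exact mul_mem (inv_mem hWmem) hmem'

end Stmt9

namespace Stmt9

theorem ker_le (A B : GL (Fin 2) ℤ)
    (hA : (A : Matrix (Fin 2) (Fin 2) ℤ) = !![1, 2; 0, 1])
    (hB : (B : Matrix (Fin 2) (Fin 2) ℤ) = !![1, 0; 2, 1]) :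
    (Matrix.GeneralLinearGroup.map (n := Fin 2) (Int.castRingHom (ZMod 4))).ker ≤
      Subgroup.closure {A, B} := by
  intro M hM
  rw [MonoidHom.mem_ker] at hM
  have hent : ∀ i j, ((M : Matrix (Fin 2) (Fin 2) ℤ) i j : ZMod 4)
      = (1 : Matrix (Fin 2) (Fin 2) (ZMod 4)) i j := by
    intro i j
    have := congrArg (fun X : GL (Fin 2) (ZMod 4) => (X : Matrix (Fin 2) (Fin 2) (ZMod 4)) i j) hM
    simpa using this
  have hdvd : ∀ i j, (4 : ℤ) ∣ (M : Matrix (Fin 2) (Fin 2) ℤ) i j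
      - (if i = j then 1 else 0) := by
    intro i j
    have h := hent i j
    rw [Matrix.one_apply] at h
    have h2 : (((M : Matrix (Fin 2) (Fin 2) ℤ) i j - (if i = j then 1 else 0) : ℤ)
        : ZMod 4) = 0 := by
      push_cast
      rw [h]
      split <;> push_cast <;> ring
    have := (ZMod.intCast_zmod_eq_zero_iff_dvd _ 4).mp h2
    exact_mod_cast this
  set a := (M : Matrix (Fin 2) (Fin 2) ℤ) 0 0 with ha
  set b := (M : Matrix (Fin 2) (Fin 2) ℤ) 0 1 with hb
  set c := (M : Matrix (Fin 2) (Fin 2) ℤ) 1 0 with hc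
  set d := (M : Matrix (Fin 2) (Fin 2) ℤ) 1 1 with hd
  have h00 : (4:ℤ) ∣ a - 1 := by simpa using hdvd 0 0
  have h01 : (4:ℤ) ∣ b := by simpa using hdvd 0 1
  have h10 : (4:ℤ) ∣ c := by simpa using hdvd 1 0
  have h11 : (4:ℤ) ∣ d - 1 := by simpa using hdvd 1 1
  have hdetu : IsUnit ((M : Matrix (Fin 2) (Fin 2) ℤ)).det :=
    (Matrix.isUnit_iff_isUnit_det _).mp M.isUnit
  have hdetv : ((M : Matrix (Fin 2) (Fin 2) ℤ)).det = a * d - b * c := by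
    rw [Matrix.det_fin_two]
  have hdet1 : ((M : Matrix (Fin 2) (Fin 2) ℤ)).det = 1 := by
    rcases Int.isUnit_iff.mp hdetu with h1 | h1
    · exact h1
    · exfalso
      obtain ⟨x, hx⟩ := h00
      obtain ⟨u, hu⟩ := h01
      obtain ⟨v, hv⟩ := h10
      obtain ⟨y, hy⟩ := h11
      rw [hdetv] at h1
      have key : (4*x + 1) * (4*y + 1) - (4*u) * (4*v) = -1 := by
        rw [show (4*x + 1 : ℤ) = a by omega, show (4*y + 1 : ℤ) = d by omega,
          show (4*u : ℤ) = b by omega, show (4*v : ℤ) = c by omega]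
        exact h1
      have : 4 * (x + y + 4*x*y - 4*u*v) = -2 := by linear_combination key
      omega
  have hmeas : a^2 + c^2 ≤ (((a^2 + c^2).toNat : ℕ) : ℤ) := Int.self_le_toNat _
  exact descent A B hA hB (a^2 + c^2).toNat M hmeas hdet1 h00 h11
    (dvd_trans (by norm_num) h01) (dvd_trans (by norm_num) h10)

end Stmt9

/-- The subgroup of `GL₂(ℤ)` generated by `[[1,2],[0,1]]` and `[[1,0],[2,1]]` is free of
rank 2 (freely generated by these two matrices), has finite index, and contains the
kernel of reduction `GL₂(ℤ) → GL₂(ℤ/4ℤ)`. -/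
theorem stmt_9 (A B : GL (Fin 2) ℤ)
    (hA : (A : Matrix (Fin 2) (Fin 2) ℤ) = !![1, 2; 0, 1])
    (hB : (B : Matrix (Fin 2) (Fin 2) ℤ) = !![1, 0; 2, 1])
    (ψ : FreeGroup (Fin 2) →* GL (Fin 2) ℤ) (hψ : ψ = FreeGroup.lift ![A, B]) :
    Function.Injective ψ ∧
    ψ.range = Subgroup.closure {A, B} ∧
    (Subgroup.closure {A, B}).index ≠ 0 ∧
    (Matrix.GeneralLinearGroup.map (n := Fin 2) (Int.castRingHom (ZMod 4))).ker ≤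
      Subgroup.closure {A, B} := by
  subst hψ
  have hker := Stmt9.ker_le A B hA hB
  refine ⟨Stmt9.psi_injective A B hA hB, ?_, ?_, hker⟩
  · rw [FreeGroup.range_lift_eq_closure]
    congr 1
    ext x
    constructor
    · rintro ⟨i, rfl⟩
      fin_cases i
      · exact Set.mem_insert _ _
      · exact Set.mem_insert_of_mem _ rfl
    · rintro (rfl | rfl)
      exacts [⟨0, rfl⟩, ⟨1, rfl⟩]
  · have hdvd := Subgroup.index_dvd_of_le hker
    have hk : (Matrix.GeneralLinearGroup.map (n := Fin 2)
        (Int.castRingHom (ZMod 4))).ker.index ≠ 0 := by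
      rw [Subgroup.index_ker]
      exact Nat.card_pos.ne'
    intro h0
    rw [h0] at hdvd
    exact hk (zero_dvd_iff.mp hdvd)
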